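/- Let 0 < α ≤ 1, let ζ ∈ ℂ with |ζ| = 1, and let h be an analytic function on the open unit disk 𝔻 with h'(z) = (1 − ζz)^α for all z ∈ 𝔻. Then the Schwarzian derivative of h satisfies S_h(z) = −(α(2 + α)/2)·ζ²/(1 − ζz)² for all z ∈ 𝔻, and sup_{z∈𝔻} (1 − |z|²)²·|S_h(z)| = 2α(2 + α). -/

import Mathlib

open Complex Metric

/-- The Schwarzian derivative `S_h = (h''/h')' - (1/2)(h''/h')²`. -/
noncomputable def schwarzian (h : ℂ → ℂ) : ℂ → ℂ := fun z =>
  deriv (fun w => deriv (deriv h) w / deriv h w) z -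
    (1 / 2) * (deriv (deriv h) z / deriv h z) ^ 2

theorem stmt_9 {α : ℝ} (hα0 : 0 < α) (hα1 : α ≤ 1) {ζ : ℂ} (hζ : ‖ζ‖ = 1)
    {h : ℂ → ℂ} (ha : AnalyticOnNhd ℂ h (ball (0:ℂ) 1))
    (hh' : ∀ z ∈ ball (0:ℂ) 1, deriv h z = (1 - ζ * z) ^ (α : ℂ)) :
    (∀ z ∈ ball (0:ℂ) 1,
      schwarzian h z = -((α : ℂ) * (2 + α) / 2) * ζ ^ 2 / (1 - ζ * z) ^ 2) ∧
    (⨆ z : ball (0:ℂ) 1,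
      (1 - ‖(z : ℂ)‖ ^ 2) ^ 2 * ‖schwarzian h z‖) =
        2 * α * (2 + α) := by
  -- basic facts
  have habs : ∀ z ∈ ball (0:ℂ) 1, ‖ζ * z‖ < 1 := by
    intro z hz
    simp only [mem_ball, dist_zero_right] at hz
    rw [norm_mul, hζ, one_mul]
    exact hz
  have hre : ∀ z ∈ ball (0:ℂ) 1, 0 < (1 - ζ * z).re := by
    intro z hz
    have h1 : (ζ * z).re ≤ ‖ζ * z‖ := Complex.re_le_norm _
    have h2 := habs z hz
    simp only [Complex.sub_re, Complex.one_re]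
    linarith
  have hne : ∀ z ∈ ball (0:ℂ) 1, 1 - ζ * z ≠ 0 := by
    intro z hz hcon
    have := hre z hz
    rw [hcon] at this
    simp at this
  have hslit : ∀ z ∈ ball (0:ℂ) 1, 1 - ζ * z ∈ Complex.slitPlane := by
    intro z hz
    exact Complex.mem_slitPlane_iff.2 (Or.inl (hre z hz))
  have hlin : ∀ z : ℂ, HasDerivAt (fun w : ℂ => 1 - ζ * w) (-ζ) z := by
    intro z
    have h1 := ((hasDerivAt_id z).const_mul ζ).const_sub (1:ℂ); rw [mul_one] at h1; exact h1
  -- second derivative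
  have hd2 : ∀ z ∈ ball (0:ℂ) 1,
      deriv (deriv h) z = (α : ℂ) * (1 - ζ * z) ^ ((α : ℂ) - 1) * (-ζ) := by
    intro z hz
    have hev : deriv h =ᶠ[nhds z] fun w => (1 - ζ * w) ^ (α : ℂ) :=
      Filter.eventually_of_mem (isOpen_ball.mem_nhds hz) hh'
    rw [hev.deriv_eq]
    exact ((hlin z).cpow_const (hslit z hz)).deriv
  -- h''/h'
  have hq : ∀ z ∈ ball (0:ℂ) 1,
      deriv (deriv h) z / deriv h z = -(α : ℂ) * ζ / (1 - ζ * z) := by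
    intro z hz
    have h0 : (1 - ζ * z) ^ (α : ℂ) ≠ 0 := by
      simp [Complex.cpow_eq_zero_iff, hne z hz]
    rw [hd2 z hz, hh' z hz, Complex.cpow_sub _ _ (hne z hz), Complex.cpow_one]
    have : (α : ℂ) * ((1 - ζ * z) ^ (α : ℂ) / (1 - ζ * z)) * -ζ / (1 - ζ * z) ^ (α : ℂ)
        = (-(α : ℂ) * ζ / (1 - ζ * z)) * ((1 - ζ * z) ^ (α : ℂ) / (1 - ζ * z) ^ (α : ℂ)) := by
      ring
    rw [this, div_self h0, mul_one]
  -- Schwarzian formula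
  have hS : ∀ z ∈ ball (0:ℂ) 1,
      schwarzian h z = -((α : ℂ) * (2 + α) / 2) * ζ ^ 2 / (1 - ζ * z) ^ 2 := by
    intro z hz
    have hev : (fun w => deriv (deriv h) w / deriv h w) =ᶠ[nhds z]
        fun w => -(α : ℂ) * ζ / (1 - ζ * w) :=
      Filter.eventually_of_mem (isOpen_ball.mem_nhds hz) hq
    have hder : HasDerivAt (fun w => -(α : ℂ) * ζ / (1 - ζ * w))
        ((0 * (1 - ζ * z) - (-(α : ℂ) * ζ) * (-ζ)) / (1 - ζ * z) ^ 2) z :=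
      (hasDerivAt_const z (-(α : ℂ) * ζ)).div (hlin z) (hne z hz)
    unfold schwarzian
    rw [hev.deriv_eq, hder.deriv, hq z hz]
    have h2 := hne z hz
    field_simp
    ring
  refine ⟨hS, ?_⟩
  set c : ℝ := α * (2 + α) / 2 with hc
  have hcpos : 0 < c := by positivity
  have h4c : 2 * α * (2 + α) = 4 * c := by rw [hc]; ring
  -- absolute value of Schwarzian
  have habsS : ∀ z ∈ ball (0:ℂ) 1,
      ‖schwarzian h z‖ = c / ‖1 - ζ * z‖ ^ 2 := by
    intro z hz
    rw [hS z hz]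
    rw [norm_div, norm_mul, norm_pow, norm_pow, hζ]
    have : -((α : ℂ) * (2 + α) / 2) = ((-(α * (2 + α) / 2) : ℝ) : ℂ) := by push_cast; ring
    rw [this, Complex.norm_real, Real.norm_eq_abs, abs_of_neg (by linarith)]
    ring_nf
    rw [hc]; ring
  have hlow : ∀ z ∈ ball (0:ℂ) 1, 1 - ‖z‖ ≤ ‖1 - ζ * z‖ := by
    intro z hz
    have := norm_sub_norm_le (1 : ℂ) (ζ * z)
    simp only [norm_one, norm_mul, hζ, one_mul] at this
    exact this
  -- upper bound
  have hval : ∀ z ∈ ball (0:ℂ) 1,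
      (1 - ‖z‖ ^ 2) ^ 2 * ‖schwarzian h z‖ ≤ 2 * α * (2 + α) := by
    intro z hz
    rw [habsS z hz, h4c]
    set t := ‖z‖ with htdef
    set a := ‖1 - ζ * z‖ with hadef
    have ht : t < 1 := by simpa [mem_ball, dist_zero_right, htdef] using hz
    have ht0 : 0 ≤ t := norm_nonneg _
    have h1 : 1 - t ≤ a := hlow z hz
    have ha0 : 0 < a := by linarith
    rw [mul_div_assoc', div_le_iff₀ (by positivity)]
    have e1 : (1 - t) ^ 2 ≤ a ^ 2 := by nlinarith
    have e3 : (1 + t) ^ 2 ≤ 4 := by nlinarith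
    calc (1 - t ^ 2) ^ 2 * c = ((1 - t) ^ 2 * (1 + t) ^ 2) * c := by ring
      _ ≤ (a ^ 2 * 4) * c :=
          mul_le_mul_of_nonneg_right
            (mul_le_mul e1 e3 (by positivity) (by positivity)) (le_of_lt hcpos)
      _ = 4 * c * a ^ 2 := by ring
  have hne0 : Nonempty (ball (0:ℂ) 1) := ⟨⟨0, by simp⟩⟩
  have hbdd : BddAbove (Set.range fun z : ball (0:ℂ) 1 =>
      (1 - ‖(z : ℂ)‖ ^ 2) ^ 2 * ‖schwarzian h z‖) := by
    refine ⟨2 * α * (2 + α), ?_⟩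
    rintro x ⟨⟨z, hz⟩, rfl⟩
    exact hval z hz
  apply le_antisymm
  · exact ciSup_le fun z => hval z z.2
  · refine le_of_forall_lt fun b hb => ?_
    set s : ℝ := Real.sqrt (max (b / c) 0) with hs
    have hs0 : 0 ≤ s := Real.sqrt_nonneg _
    have hs2 : s ^ 2 = max (b / c) 0 := Real.sq_sqrt (le_max_right _ _)
    have hbc4 : max (b / c) 0 < 4 := by
      rw [h4c] at hb
      have : b / c < 4 := by rw [div_lt_iff₀ hcpos]; linarith
      exact max_lt this (by norm_num)
    have hslt : s < 2 := by
      have h24 : (2:ℝ) = Real.sqrt 4 := by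
        rw [show (4:ℝ) = 2 ^ 2 by norm_num, Real.sqrt_sq (by norm_num)]
      rw [hs, h24]
      exact Real.sqrt_lt_sqrt (le_max_right _ _) hbc4
    set u : ℝ := max s 1 with hu
    set t : ℝ := u / 2 with htd
    have hu1 : 1 ≤ u := le_max_right _ _
    have hu2 : u < 2 := max_lt hslt (by norm_num)
    have hsu : s ≤ u := le_max_left _ _
    have ht0 : 0 ≤ t := by rw [htd]; linarith
    have ht1 : t < 1 := by rw [htd]; linarith
    have hut : u < 1 + t := by rw [htd]; linarith
    -- witness point
    set z₀ : ℂ := (t : ℂ) * (starRingEnd ℂ) ζ with hz₀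
    have habs0 : ‖z₀‖ = t := by
      rw [hz₀, norm_mul, Complex.norm_real, Real.norm_eq_abs, Complex.norm_conj, hζ, mul_one, _root_.abs_of_nonneg ht0]
    have hmem : z₀ ∈ ball (0:ℂ) 1 := by
      simp only [mem_ball, dist_zero_right, habs0]
      exact ht1
    have hzeta : ζ * z₀ = (t : ℂ) := by
      have h1 : ζ * (starRingEnd ℂ) ζ = 1 := by
        rw [Complex.mul_conj, Complex.normSq_eq_norm_sq, hζ]
        norm_num
      calc ζ * z₀ = (t : ℂ) * (ζ * (starRingEnd ℂ) ζ) := by rw [hz₀]; ring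
        _ = (t : ℂ) := by rw [h1, mul_one]
    have hone : (1 : ℂ) - ζ * z₀ = ((1 - t : ℝ) : ℂ) := by
      rw [hzeta]; push_cast; ring
    have hFz : (1 - ‖z₀‖ ^ 2) ^ 2 * ‖schwarzian h z₀‖
        = (1 + t) ^ 2 * c := by
      rw [habsS z₀ hmem, hone, Complex.norm_real, Real.norm_eq_abs, habs0,
        _root_.abs_of_nonneg (by linarith : (0:ℝ) ≤ 1 - t)]
      have h1t : (1 - t) ≠ 0 := by intro hcon; rw [htd] at hcon; linarith
      field_simp
      ring
    have hblt : b < (1 + t) ^ 2 * c := by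
      have hb' : b ≤ s ^ 2 * c := by
        rw [hs2]
        rcases le_or_gt b 0 with hb0 | hb0
        · calc b ≤ 0 := hb0
            _ ≤ max (b / c) 0 * c := by positivity
        · have : b / c ≤ max (b / c) 0 := le_max_left _ _
          calc b = b / c * c := by field_simp
            _ ≤ max (b / c) 0 * c := by nlinarith
      have hsq : s ^ 2 < (1 + t) ^ 2 := by nlinarith
      nlinarith
    calc b < (1 + t) ^ 2 * c := hblt
      _ = (1 - ‖z₀‖ ^ 2) ^ 2 * ‖schwarzian h z₀‖ := hFz.symm
      _ ≤ _ := le_ciSup hbdd ⟨z₀, hmem⟩
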